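/- Let λ_1,...,λ_N be positive reals with Σ_i λ_i = N and V = (Π_i λ_i)^{1/2} ≤ 1. If D ≥ 0 satisfies D² ≤ N − N²/(Σ_i λ_i²), then V^{4/N} ≤ N(N−1−D²)/((N−1)(N−D²)) (assuming N ≥ 2 and D² < N). -/

import Mathlib

open scoped BigOperators

private lemma V_upper_aux (n s d : ℝ) (hn : 1 < n) (hs : 0 < s) (hd : 0 ≤ d)
    (hdn : d < n) (hkey : n ^ 2 ≤ (n - d) * s) :
    (n * n - s) / (n * n - n) ≤ n * (n - 1 - d) / ((n - 1) * (n - d)) := by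
  have hc : (0 : ℝ) < n * n - n := by nlinarith
  have hden : (0 : ℝ) < (n - 1) * (n - d) := by nlinarith
  rw [div_le_div_iff₀ hc hden]
  nlinarith [mul_nonneg (sub_nonneg.mpr hkey) (by linarith : (0:ℝ) ≤ n - 1)]

/-- Upper bound of V in terms of D: if λ_i > 0, Σ λ_i = N, V = (Π λ_i)^{1/2} ≤ 1,
D ≥ 0 with D² ≤ N − N²/(Σ λ_i²) and D² < N, N ≥ 2, then
V^{4/N} ≤ N(N−1−D²)/((N−1)(N−D²)). -/
theorem V_upper_bound_of_D (N : ℕ) (hN : 2 ≤ N) (lam : Fin N → ℝ)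
    (hpos : ∀ i, 0 < lam i) (hsum : ∑ i, lam i = (N : ℝ))
    (V : ℝ) (hV : V = Real.sqrt (∏ i, lam i)) (hV1 : V ≤ 1)
    (D : ℝ) (hD0 : 0 ≤ D) (hDN : D ^ 2 < N)
    (hD : D ^ 2 ≤ (N : ℝ) - (N : ℝ) ^ 2 / (∑ i, (lam i) ^ 2)) :
    V ^ ((4 : ℝ) / N)
      ≤ (N : ℝ) * ((N : ℝ) - 1 - D ^ 2) / (((N : ℝ) - 1) * ((N : ℝ) - D ^ 2)) := by
  have hN1 : (1 : ℝ) < (N : ℝ) := by exact_mod_cast lt_of_lt_of_le one_lt_two hN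
  have hNpos : (0 : ℝ) < N := by linarith
  set P : ℝ := ∏ i, lam i with hP
  have hPpos : 0 < P := Finset.prod_pos fun i _ => hpos i
  set s2 : ℝ := ∑ i, (lam i) ^ 2 with hs2
  have hs2pos : 0 < s2 :=
    Finset.sum_pos (fun i _ => pow_pos (hpos i) 2) ⟨⟨0, by omega⟩, Finset.mem_univ _⟩
  set T := (Finset.univ : Finset (Fin N)).offDiag with hT
  have hcardT : T.card = N * N - N := by
    rw [hT, Finset.offDiag_card, Finset.card_univ, Fintype.card_fin]
  set c : ℝ := (N : ℝ) * N - N with hc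
  have hcpos : 0 < c := by nlinarith
  have hcardT' : (T.card : ℝ) = c := by
    have hle : N ≤ N * N := Nat.le_mul_of_pos_left N (by omega)
    rw [hcardT, Nat.cast_sub hle, Nat.cast_mul, hc]
  -- product over off-diagonal
  have hfull : ∏ p ∈ Finset.univ ×ˢ Finset.univ, lam p.1 * lam p.2 = P ^ N * P ^ N := by
    rw [Finset.prod_product]
    have : ∀ i : Fin N, (∏ j, lam i * lam j) = lam i ^ N * P := by
      intro i
      rw [Finset.prod_mul_distrib, Finset.prod_const, Finset.card_univ, Fintype.card_fin, hP]
    simp only [this]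
    rw [Finset.prod_mul_distrib, Finset.prod_pow, Finset.prod_const, Finset.card_univ,
      Fintype.card_fin, hP]
  have hdiag : ∏ p ∈ (Finset.univ : Finset (Fin N)).diag, lam p.1 * lam p.2 = P * P := by
    rw [Finset.prod_diag]
    rw [Finset.prod_mul_distrib]
  have hsplit : P * P * ∏ p ∈ T, lam p.1 * lam p.2 = P ^ N * P ^ N := by
    rw [← hdiag, ← hfull, ← Finset.diag_union_offDiag,
      Finset.prod_union (Finset.disjoint_diag_offDiag _), hT]
  have hprodT : ∏ p ∈ T, lam p.1 * lam p.2 = P ^ (2 * N - 2) := by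
    have h2 : 2 ≤ 2 * N := by omega
    have : P * P * P ^ (2 * N - 2) = P ^ N * P ^ N := by
      rw [← pow_add, ← sq, ← pow_add]
      congr 1
      omega
    have hne : P * P ≠ 0 := by positivity
    exact mul_left_cancel₀ hne (hsplit.trans this.symm)
  -- sum over off-diagonal
  have hsfull : ∑ p ∈ Finset.univ ×ˢ Finset.univ, lam p.1 * lam p.2 = (N : ℝ) * N := by
    rw [Finset.sum_product]
    simp only [← Finset.mul_sum, ← Finset.sum_mul, hsum]
  have hsdiag : ∑ p ∈ (Finset.univ : Finset (Fin N)).diag, lam p.1 * lam p.2 = s2 := by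
    rw [Finset.sum_diag]
    simp [hs2, sq]
  have hsumT : ∑ p ∈ T, lam p.1 * lam p.2 = (N : ℝ) * N - s2 := by
    have := Finset.sum_union (f := fun p : Fin N × Fin N => lam p.1 * lam p.2)
      (Finset.disjoint_diag_offDiag (Finset.univ : Finset (Fin N)))
    rw [Finset.diag_union_offDiag, hsfull, hsdiag, ← hT] at this
    linarith
  -- AM-GM
  have hAMGM := Real.geom_mean_le_arith_mean_weighted T (fun _ => 1 / c)
    (fun p => lam p.1 * lam p.2) (fun i _ => one_div_nonneg.mpr hcpos.le)
    (by rw [Finset.sum_const, nsmul_eq_mul, hcardT']; field_simp)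
    (fun p _ => (mul_pos (hpos _) (hpos _)).le)
  have hgeo : (∏ p ∈ T, (lam p.1 * lam p.2) ^ (1 / c : ℝ)) = P ^ ((2 : ℝ) / N) := by
    rw [Real.finset_prod_rpow T _ (fun p _ => (mul_pos (hpos _) (hpos _)).le), hprodT,
      ← Real.rpow_natCast P (2 * N - 2), ← Real.rpow_mul hPpos.le]
    congr 1
    have : ((2 * N - 2 : ℕ) : ℝ) = 2 * N - 2 := by
      push_cast [Nat.cast_sub (by omega : 2 ≤ 2 * N)]
      ring
    rw [this, hc]
    rw [mul_one_div, div_eq_div_iff (by nlinarith : (0:ℝ) < N*N - N).ne' hNpos.ne']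
    ring
  have hsumT' : (∑ p ∈ T, (1 / c) * (lam p.1 * lam p.2)) = ((N : ℝ) * N - s2) / c := by
    rw [← Finset.mul_sum, hsumT]
    ring
  rw [hgeo, hsumT'] at hAMGM
  -- rewrite V power
  have hVpow : V ^ ((4 : ℝ) / N) = P ^ ((2 : ℝ) / N) := by
    rw [hV, Real.sqrt_eq_rpow, ← Real.rpow_mul hPpos.le]
    congr 1
    ring
  rw [hVpow]
  -- final algebraic step
  have hkey : (N : ℝ) ^ 2 ≤ ((N : ℝ) - D ^ 2) * s2 := by
    have h1 : (N : ℝ) ^ 2 / s2 ≤ (N : ℝ) - D ^ 2 := by linarith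
    calc (N : ℝ) ^ 2 = (N : ℝ) ^ 2 / s2 * s2 := by field_simp
    _ ≤ ((N : ℝ) - D ^ 2) * s2 := by
        apply mul_le_mul_of_nonneg_right h1 hs2pos.le
  have hfinal : ((N : ℝ) * N - s2) / c
      ≤ (N : ℝ) * ((N : ℝ) - 1 - D ^ 2) / (((N : ℝ) - 1) * ((N : ℝ) - D ^ 2)) := by
    rw [hc]
    exact V_upper_aux (N : ℝ) s2 (D ^ 2) hN1 hs2pos (sq_nonneg D) hDN hkey
  linarith
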